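/- Let V be an irreducible weight module for the toroidal Lie algebra τ̃ with finite-dimensional weight spaces. Any nonzero central operator z of degree m on V is invertible, and its inverse is a central operator of degree −m. -/

import Mathlib

/- STATEMENT 9: Let V be an irreducible weight module for the toroidal Lie
algebra τ̃ with finite-dimensional weight spaces. Any nonzero central operator z
of degree m on V is invertible, and its inverse is a central operator of
degree −m. -/

abbrev OmegaA (n : ℕ) : Type := ((Fin n → ℤ) × Fin n) →₀ ℂ

noncomputable def dAelt (n : ℕ) (r : Fin n → ℤ) : OmegaA n :=
  ∑ i, Finsupp.single (r, i) (r i : ℂ)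

noncomputable def dA (n : ℕ) : Submodule ℂ (OmegaA n) :=
  Submodule.span ℂ (Set.range (dAelt n))

abbrev OmegaQuot (n : ℕ) := OmegaA n ⧸ dA n

noncomputable def Kc (n : ℕ) (u : Fin n → ℂ) (r : Fin n → ℤ) : OmegaQuot n :=
  Submodule.Quotient.mk (∑ i, Finsupp.single (r, i) (u i))

def zc {n : ℕ} (r : Fin n → ℤ) : Fin n → ℂ := fun i => (r i : ℂ)

/-- τ̃ = 𝒢⊗A ⊕ Ω_A/d_A ⊕ D as a vector space. -/
abbrev TorTilde (n : ℕ) (G : Type*) [LieRing G] [LieAlgebra ℂ G] :=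
  ((Fin n → ℤ) →₀ G) × OmegaQuot n × (Fin n → ℂ)

section
variable (n : ℕ) (G : Type*) [LieRing G] [LieAlgebra ℂ G]

noncomputable def gX (r : Fin n → ℤ) (X : G) : TorTilde n G := (Finsupp.single r X, 0, 0)

noncomputable def gK (u : Fin n → ℂ) (r : Fin n → ℤ) : TorTilde n G := (0, Kc n u r, 0)

noncomputable def gd (i : Fin n) : TorTilde n G := (0, 0, Pi.single i 1)

/-- The Cartan subalgebra h̃ = h ⊕ Σ ℂKᵢ ⊕ D of τ̃, as a set of elements. -/
noncomputable def cartSet (H : LieSubalgebra ℂ G) : Set (TorTilde n G) :=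
  ((fun X : G => gX n G 0 X) '' (H : Set G)) ∪
    (Set.range fun u : Fin n → ℂ => gK n G u 0) ∪ (Set.range (gd n G))

/-- The weight space of a weight module attached to a weight χ (a simultaneous
eigenvalue function on the Cartan h̃). -/
noncomputable def wtSp (H : LieSubalgebra ℂ G) {V : Type*} [AddCommGroup V] [Module ℂ V]
    (ρ : TorTilde n G →ₗ[ℂ] Module.End ℂ V) (χ : TorTilde n G → ℂ) : Submodule ℂ V :=
  ⨅ x ∈ cartSet n G H, Module.End.eigenspace (ρ x) (χ x)
end

theorem stmt9 (n : ℕ) (G : Type*) [LieRing G] [LieAlgebra ℂ G]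
    [FiniteDimensional ℂ G] [LieAlgebra.IsSimple ℂ G]
    (H : LieSubalgebra ℂ G) (hH : H.IsCartanSubalgebra)
    (Bf : G →ₗ[ℂ] G →ₗ[ℂ] ℂ) (hBsymm : ∀ X Y, Bf X Y = Bf Y X)
    (hBinv : ∀ X Y Z, Bf ⁅X, Y⁆ Z = Bf X ⁅Y, Z⁆)
    -- the toroidal Lie bracket on τ̃:
    (br : TorTilde n G →ₗ[ℂ] TorTilde n G →ₗ[ℂ] TorTilde n G)
    (h1 : ∀ (X Y : G) (r s : Fin n → ℤ),
      br (gX n G r X) (gX n G s Y) =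
        gX n G (r + s) ⁅X, Y⁆ + Bf X Y • gK n G (zc r) (r + s))
    (h2 : ∀ (ω : OmegaQuot n) (r s : Fin n → ℤ) (X : G) (u : Fin n → ℂ),
      br (0, ω, 0) (gX n G r X) = 0 ∧ br (0, ω, 0) (gK n G u s) = 0)
    (h3 : ∀ (i : Fin n) (r : Fin n → ℤ) (X : G),
      br (gd n G i) (gX n G r X) = (r i : ℂ) • gX n G r X)
    (h4 : ∀ (i : Fin n) (u : Fin n → ℂ) (r : Fin n → ℤ),
      br (gd n G i) (gK n G u r) = (r i : ℂ) • gK n G u r)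
    (h5 : ∀ i j : Fin n, br (gd n G i) (gd n G j) = 0)
    (hskew : ∀ x, br x x = 0)
    (hjac : ∀ x y z, br x (br y z) + br y (br z x) + br z (br x y) = 0)
    -- V is a module for τ̃:
    (V : Type*) [AddCommGroup V] [Module ℂ V] [Nontrivial V]
    (ρ : TorTilde n G →ₗ[ℂ] Module.End ℂ V)
    (hρ : ∀ x y, ρ (br x y) = ⁅ρ x, ρ y⁆)
    -- V is a weight module with finite-dimensional weight spaces:
    (hwt : ⨆ χ : TorTilde n G → ℂ, wtSp n G H ρ χ = ⊤)
    (hfin : ∀ χ : TorTilde n G → ℂ, FiniteDimensional ℂ (wtSp n G H ρ χ))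
    -- V is irreducible:
    (hirr : ∀ U : Submodule ℂ V, (∀ x v, v ∈ U → ρ x v ∈ U) → U = ⊥ ∨ U = ⊤)
    -- z is a central operator of degree m:
    (m : Fin n → ℤ) (z : V →ₗ[ℂ] V)
    (hz1 : ∀ (r : Fin n → ℤ) (X : G), ρ (gX n G r X) ∘ₗ z = z ∘ₗ ρ (gX n G r X))
    (hz2 : ∀ (u : Fin n → ℂ) (r : Fin n → ℤ), ρ (gK n G u r) ∘ₗ z = z ∘ₗ ρ (gK n G u r))
    (hz3 : ∀ i : Fin n, ρ (gd n G i) ∘ₗ z - z ∘ₗ ρ (gd n G i) = (m i : ℂ) • z) :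
    -- any nonzero central operator is invertible, with inverse central of degree −m:
    z ≠ 0 →
      ∃ z' : V →ₗ[ℂ] V, z' ∘ₗ z = LinearMap.id ∧ z ∘ₗ z' = LinearMap.id ∧
        (∀ (r : Fin n → ℤ) (X : G), ρ (gX n G r X) ∘ₗ z' = z' ∘ₗ ρ (gX n G r X)) ∧
        (∀ (u : Fin n → ℂ) (r : Fin n → ℤ), ρ (gK n G u r) ∘ₗ z' = z' ∘ₗ ρ (gK n G u r)) ∧
        (∀ i : Fin n, ρ (gd n G i) ∘ₗ z' - z' ∘ₗ ρ (gd n G i) = ((-(m i) : ℤ) : ℂ) • z') := by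
  intro hz0
  -- z commutes with ρ of the first component
  have hcomm_f : ∀ f : (Fin n → ℤ) →₀ G,
      ρ (f, 0, 0) ∘ₗ z = z ∘ₗ ρ (f, 0, 0) := by
    intro f
    induction f using Finsupp.induction with
    | zero => rw [show ((0, 0, 0) : TorTilde n G) = 0 from rfl]; simp
    | single_add r X f hrf hX ih =>
      have hd : ((Finsupp.single r X + f : (Fin n → ℤ) →₀ G), (0 : OmegaQuot n),
          (0 : Fin n → ℂ)) = gX n G r X + (f, 0, 0) := by
        simp [gX, Prod.ext_iff]
      rw [hd, map_add, LinearMap.add_comp, LinearMap.comp_add, hz1, ih]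
  -- z commutes with ρ of the middle component
  have hKc : ∀ (p : (Fin n → ℤ) × Fin n) (c : ℂ),
      (Submodule.Quotient.mk (Finsupp.single p c) : OmegaQuot n)
        = Kc n (Pi.single p.2 c) p.1 := by
    rintro ⟨r, i⟩ c
    unfold Kc
    congr 1
    rw [Finset.sum_eq_single_of_mem i (Finset.mem_univ i)]
    · simp
    · intro j _ hj
      rw [Pi.single_eq_of_ne hj, Finsupp.single_zero]
  have hcomm_ω : ∀ ω : OmegaQuot n,
      ρ (0, ω, 0) ∘ₗ z = z ∘ₗ ρ (0, ω, 0) := by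
    intro ω
    obtain ⟨a, rfl⟩ := Submodule.Quotient.mk_surjective _ ω
    induction a using Finsupp.induction with
    | zero => rw [Submodule.Quotient.mk_zero, show ((0, 0, 0) : TorTilde n G) = 0 from rfl]; simp
    | single_add p c f hpf hc ih =>
      have hd : ((0 : (Fin n → ℤ) →₀ G),
          (Submodule.Quotient.mk (Finsupp.single p c + f) : OmegaQuot n),
          (0 : Fin n → ℂ)) = gK n G (Pi.single p.2 c) p.1 + (0, Submodule.Quotient.mk f, 0) := by
        simp [gK, Prod.ext_iff, ← hKc, ← Submodule.Quotient.mk_add]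
      rw [hd, map_add, LinearMap.add_comp, LinearMap.comp_add, hz2, ih]
  -- commutator with ρ of the third component
  have hcomm_d : ∀ d : Fin n → ℂ,
      ρ (0, 0, d) ∘ₗ z - z ∘ₗ ρ (0, 0, d) = (∑ i, d i * (m i : ℂ)) • z := by
    intro d
    have hd : ((0 : (Fin n → ℤ) →₀ G), (0 : OmegaQuot n), d) = ∑ i, d i • gd n G i := by
      have h1 : ∀ i, d i • gd n G i =
          ((0 : (Fin n → ℤ) →₀ G), (0 : OmegaQuot n), Pi.single i (d i)) := by
        intro i
        simp only [gd, Prod.smul_mk, smul_zero, Prod.mk.injEq, true_and]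
        rw [← Pi.single_smul, smul_eq_mul, mul_one]
      simp only [h1]
      refine Prod.ext ?_ (Prod.ext ?_ ?_) <;>
        simp [Prod.fst_sum, Prod.snd_sum, Finset.univ_sum_single]
    have hρd : ρ ((0 : (Fin n → ℤ) →₀ G), (0 : OmegaQuot n), d)
        = ∑ i, d i • ρ (gd n G i) := by
      rw [hd, map_sum]; simp only [map_smul]
    ext v
    have h := fun i => LinearMap.ext_iff.mp (hz3 i) v
    simp only [LinearMap.sub_apply, LinearMap.comp_apply, LinearMap.smul_apply] at h
    simp only [hρd, LinearMap.sub_apply, LinearMap.comp_apply, LinearMap.sum_apply,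
      LinearMap.smul_apply, map_sum, map_smul]
    rw [← Finset.sum_sub_distrib, Finset.sum_smul]
    refine Finset.sum_congr rfl fun i _ => ?_
    rw [← smul_sub, h i, smul_smul]
  -- the general commutator relation
  have hcomm : ∀ (f : (Fin n → ℤ) →₀ G) (ω : OmegaQuot n) (d : Fin n → ℂ) (v : V),
      z (ρ (f, ω, d) v) = ρ (f, ω, d) (z v) - (∑ i, d i * (m i : ℂ)) • z v := by
    intro f ω d v
    have hx : ρ ((f, ω, d) : TorTilde n G) = ρ (f, 0, 0) + ρ (0, ω, 0) + ρ (0, 0, d) := by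
      rw [← map_add, ← map_add]
      congr 1
      simp [Prod.ext_iff]
    have h1 := LinearMap.ext_iff.mp (hcomm_f f) v
    have h2 := LinearMap.ext_iff.mp (hcomm_ω ω) v
    have h3 := LinearMap.ext_iff.mp (hcomm_d d) v
    simp only [LinearMap.comp_apply, LinearMap.sub_apply, LinearMap.smul_apply] at h1 h2 h3
    rw [hx]
    simp only [LinearMap.add_apply, map_add]
    rw [h1, h2]
    have h4 : z (ρ ((0 : (Fin n → ℤ) →₀ G), (0 : OmegaQuot n), d) v)
        = ρ ((0 : (Fin n → ℤ) →₀ G), (0 : OmegaQuot n), d) (z v)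
          - (∑ i, d i * (m i : ℂ)) • z v := by
      rw [← h3]; abel
    rw [h4]; abel
  -- z is injective
  have hinj : Function.Injective z := by
    have hker : LinearMap.ker z = ⊥ ∨ LinearMap.ker z = ⊤ := by
      apply hirr
      rintro ⟨f, ω, d⟩ v hv
      rw [LinearMap.mem_ker] at hv ⊢
      rw [hcomm f ω d v, hv, map_zero, smul_zero, sub_zero]
    rcases hker with h | h
    · exact LinearMap.ker_eq_bot.mp h
    · exfalso; apply hz0; ext v
      have : v ∈ LinearMap.ker z := h ▸ Submodule.mem_top
      simpa using this
  -- z is surjective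
  have hsurj : Function.Surjective z := by
    have hrg : LinearMap.range z = ⊥ ∨ LinearMap.range z = ⊤ := by
      apply hirr
      rintro ⟨f, ω, d⟩ v ⟨w, rfl⟩
      refine ⟨ρ (f, ω, d) w + (∑ i, d i * (m i : ℂ)) • w, ?_⟩
      rw [map_add, map_smul, hcomm f ω d w]
      abel
    rcases hrg with h | h
    · exfalso; apply hz0; ext v
      have : z v ∈ LinearMap.range z := ⟨v, rfl⟩
      rw [h] at this; simpa using this
    · exact LinearMap.range_eq_top.mp h
  -- the inverse
  let e := LinearEquiv.ofBijective z ⟨hinj, hsurj⟩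
  refine ⟨e.symm.toLinearMap, ?_, ?_, ?_, ?_, ?_⟩
  · ext v; exact e.symm_apply_apply v
  · ext v; exact e.apply_symm_apply v
  · -- commutes with gX
    intro r X
    ext v
    apply hinj
    have hc := LinearMap.ext_iff.mp (hz1 r X) (e.symm v)
    simp only [LinearMap.comp_apply, LinearEquiv.coe_coe] at hc ⊢
    have hzz : ∀ w, z (e.symm w) = w := fun w => e.apply_symm_apply w
    rw [hzz, ← hc, hzz]
  · -- commutes with gK
    intro u r
    ext v
    apply hinj
    have hc := LinearMap.ext_iff.mp (hz2 u r) (e.symm v)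
    simp only [LinearMap.comp_apply, LinearEquiv.coe_coe] at hc ⊢
    have hzz : ∀ w, z (e.symm w) = w := fun w => e.apply_symm_apply w
    rw [hzz, ← hc, hzz]
  · -- degree −m relation
    intro i
    ext v
    apply hinj
    have hc := LinearMap.ext_iff.mp (hz3 i) (e.symm v)
    simp only [LinearMap.comp_apply, LinearMap.sub_apply, LinearMap.smul_apply,
      LinearEquiv.coe_coe] at hc ⊢
    have hzz : ∀ w, z (e.symm w) = w := fun w => e.apply_symm_apply w
    -- hc : ρ (gd i) (z (e.symm v)) - z (ρ (gd i) (e.symm v)) = m i • z (e.symm v)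
    rw [hzz] at hc
    have h5 : z (ρ (gd n G i) (e.symm v)) = ρ (gd n G i) v - (m i : ℂ) • v := by
      rw [← hc]; abel
    rw [map_sub, h5, hzz, map_smul, hzz, Int.cast_neg, neg_smul]
    abel
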